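/- Let λ_i > 0 and μ_i > 0 for i = 1, 2. If 2(λ₂ − λ₁) ≥ μ₁ − μ₂ and μ₁ ≥ μ₂, then the ratio t ↦ φ^C_1(t)/φ^C_2(t) is monotone increasing on (0, ∞), i.e. τ^C_1 ≥_lr τ^C_2. -/

import Mathlib

/-- `b_i = sqrt(μ_i² + 4 λ_i μ_i)` for the cold standby system. -/
noncomputable def bC (l m : ℝ) : ℝ := Real.sqrt (m ^ 2 + 4 * l * m)

/-- Density of the lifetime of the Markovian two-unit cold standby system. -/
noncomputable def phiC (l m t : ℝ) : ℝ :=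
  Real.exp (-((2 * l + m) * t / 2)) * (2 * l ^ 2 / bC l m) * Real.sinh (bC l m * t / 2)

open Real

/-- `(e^x - 1)/x` is increasing: convexity of `exp`. -/
lemma lemE {q p : ℝ} (hq : 0 ≤ q) (hqp : q ≤ p) :
    p * (Real.exp q - 1) ≤ q * (Real.exp p - 1) := by
  rcases eq_or_lt_of_le (hq.trans hqp) with hp | hp
  · have hq0 : q = 0 := le_antisymm (hqp.trans hp.symm.le) hq
    simp [← hp, hq0]
  · have key := convexOn_exp.2 (Set.mem_univ p) (Set.mem_univ (0:ℝ))
      (by positivity : (0:ℝ) ≤ q / p)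
      (by have : q / p ≤ 1 := (div_le_one hp).2 hqp; linarith : (0:ℝ) ≤ 1 - q / p)
      (by ring)
    simp only [smul_eq_mul, mul_zero, add_zero, Real.exp_zero, mul_one] at key
    have h2 : Real.exp q ≤ q / p * Real.exp p + (1 - q / p) := by
      have : q / p * p = q := div_mul_cancel₀ q hp.ne'
      rwa [this] at key
    have := mul_le_mul_of_nonneg_left h2 hp.le
    rw [mul_add, ← mul_assoc, mul_div_cancel₀ _ hp.ne'] at this
    have hpq : p * (1 - q / p) = p - q := by field_simp
    nlinarith

lemma convexOn_sinh' : ConvexOn ℝ (Set.Ici (0:ℝ)) Real.sinh := by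
  apply convexOn_of_deriv2_nonneg (convex_Ici 0)
    Real.continuous_sinh.continuousOn
    Real.differentiable_sinh.differentiableOn
  · rw [Real.deriv_sinh]
    exact Real.differentiable_cosh.differentiableOn
  · intro x hx
    rw [interior_Ici, Set.mem_Ioi] at hx
    simp only [Function.iterate_succ, Function.iterate_zero, Function.comp_apply, id_eq]
    rw [Real.deriv_sinh, Real.deriv_cosh]
    exact (Real.sinh_pos_iff.2 hx).le

/-- `sinh x / x` is increasing on `[0, ∞)`. -/
lemma lemS {q p : ℝ} (hq : 0 ≤ q) (hqp : q ≤ p) :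
    p * Real.sinh q ≤ q * Real.sinh p := by
  rcases eq_or_lt_of_le (hq.trans hqp) with hp | hp
  · have hq0 : q = 0 := le_antisymm (hqp.trans hp.symm.le) hq
    simp [← hp, hq0]
  · have key := convexOn_sinh'.2 (Set.mem_Ici.2 (hq.trans hqp)) (Set.mem_Ici.2 le_rfl)
      (by positivity : (0:ℝ) ≤ q / p)
      (by have : q / p ≤ 1 := (div_le_one hp).2 hqp; linarith : (0:ℝ) ≤ 1 - q / p)
      (by ring)
    simp only [smul_eq_mul, mul_zero, add_zero, Real.sinh_zero, mul_one] at key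
    have hqpp : q / p * p = q := div_mul_cancel₀ q hp.ne'
    rw [hqpp] at key
    have := mul_le_mul_of_nonneg_left key hp.le
    rw [← mul_assoc, mul_div_cancel₀ _ hp.ne'] at this
    linarith

/-- `x * coth x` is increasing: `v ≤ u` implies `v sinh u cosh v ≤ u cosh u sinh v`. -/
lemma lemCoth {v u : ℝ} (hv : 0 ≤ v) (hvu : v ≤ u) :
    v * Real.sinh u * Real.cosh v ≤ u * Real.cosh u * Real.sinh v := by
  have hS := lemS (q := u - v) (p := u + v) (by linarith) (by linarith)
  rw [Real.sinh_add, Real.sinh_sub] at hS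
  nlinarith [hS]

/-- Core inequality for the log-derivative of the likelihood ratio. -/
lemma core {a1 a2 c1 c2 t : ℝ} (ht : 0 < t) (hc1 : 0 < c1) (hc2 : 0 < c2)
    (hd : a1 ≤ a2) (hd2 : c2 - c1 ≤ a2 - a1) :
    c2 * Real.sinh (c1 * t) * Real.cosh (c2 * t) ≤
      (a2 - a1) * Real.sinh (c1 * t) * Real.sinh (c2 * t)
        + c1 * Real.cosh (c1 * t) * Real.sinh (c2 * t) := by
  set u1 := c1 * t with hu1
  set u2 := c2 * t with hu2
  have hu1p : 0 < u1 := mul_pos hc1 ht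
  have hu2p : 0 < u2 := mul_pos hc2 ht
  have hs1 : 0 < Real.sinh u1 := Real.sinh_pos_iff.2 hu1p
  have hs2 : 0 < Real.sinh u2 := Real.sinh_pos_iff.2 hu2p
  rcases le_or_gt c2 c1 with hcc | hcc
  · -- then u2 ≤ u1 and x coth x monotone suffices
    have h := lemCoth (v := u2) (u := u1) hu2p.le (by
      rw [hu1, hu2]; exact mul_le_mul_of_nonneg_right hcc ht.le)
    -- h : u2 * sinh u1 * cosh u2 ≤ u1 * cosh u1 * sinh u2
    have hA : u2 * Real.sinh u1 * Real.cosh u2 = t * (c2 * Real.sinh u1 * Real.cosh u2) := by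
      rw [hu2]; ring
    have hB : u1 * Real.cosh u1 * Real.sinh u2 = t * (c1 * Real.cosh u1 * Real.sinh u2) := by
      rw [hu1]; ring
    rw [hA, hB] at h
    have h' := le_of_mul_le_mul_left h ht
    nlinarith [mul_pos hs1 hs2]
  · -- c1 < c2 : use δ ≥ c2 - c1 and (e^x-1)/x increasing
    have hu12 : u1 ≤ u2 := by
      rw [hu1, hu2]; exact mul_le_mul_of_nonneg_right hcc.le ht.le
    have hE := lemE (q := 2 * u1) (p := 2 * u2) (by linarith) (by linarith)
    -- hE : 2u2 * (exp (2u1) - 1) ≤ 2u1 * (exp (2u2) - 1)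
    have e1 : Real.exp (2 * u1) = Real.exp u1 * Real.exp u1 := by
      rw [two_mul, Real.exp_add]
    have e2 : Real.exp (2 * u2) = Real.exp u2 * Real.exp u2 := by
      rw [two_mul, Real.exp_add]
    rw [e1, e2] at hE
    rw [hu1, hu2] at hE
    have hpoly : c2 * (Real.exp u1 * Real.exp u1 - 1) ≤ c1 * (Real.exp u2 * Real.exp u2 - 1) := by
      nlinarith [hE, ht]
    have hx1 : (0:ℝ) < Real.exp u1 := Real.exp_pos _
    have hx2 : (0:ℝ) < Real.exp u2 := Real.exp_pos _
    -- target intermediate: c2 * sinh u1 * exp (-u2) ≤ c1 * sinh u2 * exp (-u1)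
    have key : c2 * Real.sinh u1 * Real.exp (-u2) ≤ c1 * Real.sinh u2 * Real.exp (-u1) := by
      rw [Real.sinh_eq, Real.sinh_eq, Real.exp_neg, Real.exp_neg]
      have eL : c2 * ((Real.exp u1 - (Real.exp u1)⁻¹) / 2) * (Real.exp u2)⁻¹
          = c2 * (Real.exp u1 * Real.exp u1 - 1) / (2 * Real.exp u1 * Real.exp u2) := by
        rw [eq_div_iff (by positivity)]; field_simp
      have eR : c1 * ((Real.exp u2 - (Real.exp u2)⁻¹) / 2) * (Real.exp u1)⁻¹
          = c1 * (Real.exp u2 * Real.exp u2 - 1) / (2 * Real.exp u1 * Real.exp u2) := by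
        rw [eq_div_iff (by positivity)]; field_simp
      rw [eL, eR]
      exact div_le_div_of_nonneg_right hpoly (by positivity) |>.trans_eq rfl
    -- now conclude
    have eC1 : Real.cosh u1 = Real.sinh u1 + Real.exp (-u1) := by
      have := Real.cosh_sub_sinh u1; linarith
    have eC2 : Real.cosh u2 = Real.sinh u2 + Real.exp (-u2) := by
      have := Real.cosh_sub_sinh u2; linarith
    rw [eC1, eC2]
    nlinarith [key, mul_le_mul_of_nonneg_right hd2 (le_of_lt (mul_pos hs1 hs2))]

lemma bkey {l1 l2 m1 m2 b1 b2 : ℝ}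
    (h1 : 0 < l1) (h2 : 0 < l2) (hm1 : 0 < m1) (hm2 : 0 < m2)
    (hl21 : l1 ≤ l2) (hmu : m2 ≤ m1)
    (hb1 : 0 < b1) (hb2 : 0 < b2)
    (sq1 : b1 ^ 2 = m1 ^ 2 + 4 * l1 * m1) (sq2 : b2 ^ 2 = m2 ^ 2 + 4 * l2 * m2) :
    b2 - b1 ≤ (2 * l2 + m2) - (2 * l1 + m1) := by
  have hS1 : (0:ℝ) < 2 * l1 + m1 + b1 := by positivity
  have hS2 : (0:ℝ) < 2 * l2 + m2 + b2 := by positivity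
  -- step 1 : l1^2 * b2 ≤ l2^2 * b1
  have hsqcomp : (l1 ^ 2 * b2) ^ 2 ≤ (l2 ^ 2 * b1) ^ 2 := by
    have e1 : (l1 ^ 2 * b2) ^ 2 = l1 ^ 4 * (m2 ^ 2 + 4 * l2 * m2) := by
      rw [mul_pow, sq2]; ring
    have e2 : (l2 ^ 2 * b1) ^ 2 = l2 ^ 4 * (m1 ^ 2 + 4 * l1 * m1) := by
      rw [mul_pow, sq1]; ring
    rw [e1, e2]
    have p1 : l1 ^ 4 * m2 ^ 2 ≤ l2 ^ 4 * m1 ^ 2 :=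
      mul_le_mul (pow_le_pow_left₀ h1.le hl21 4) (pow_le_pow_left₀ hm2.le hmu 2)
        (by positivity) (by positivity)
    have p0 : l1 ^ 3 * m2 ≤ l2 ^ 3 * m1 :=
      mul_le_mul (pow_le_pow_left₀ h1.le hl21 3) hmu hm2.le (by positivity)
    have p2 := mul_le_mul_of_nonneg_left p0 (by positivity : (0:ℝ) ≤ 4 * l1 * l2)
    nlinarith [p1, p2]
  have step1 : l1 ^ 2 * b2 ≤ l2 ^ 2 * b1 := by
    nlinarith [hsqcomp, mul_pos (mul_pos h2 h2) hb1, mul_pos (mul_pos h1 h1) hb2]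
  -- rewrite differences as quotients
  have hX1 : (2 * l1 + m1) - b1 = 4 * l1 ^ 2 / (2 * l1 + m1 + b1) := by
    rw [eq_div_iff hS1.ne']; linear_combination (-1 : ℝ) * sq1
  have hX2 : (2 * l2 + m2) - b2 = 4 * l2 ^ 2 / (2 * l2 + m2 + b2) := by
    rw [eq_div_iff hS2.ne']; linear_combination (-1 : ℝ) * sq2
  have hdivs : 4 * l1 ^ 2 / (2 * l1 + m1 + b1) ≤ 4 * l2 ^ 2 / (2 * l2 + m2 + b2) := by
    rw [div_le_div_iff₀ hS1 hS2]
    have q1 : l1 ^ 2 * m2 ≤ l2 ^ 2 * m1 :=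
      mul_le_mul (pow_le_pow_left₀ h1.le hl21 2) hmu hm2.le (by positivity)
    have q2 := mul_le_mul_of_nonneg_left hl21 (by positivity : (0:ℝ) ≤ l1 * l2)
    nlinarith [step1, q1, q2]
  have := hX1 ▸ hX2 ▸ (hdivs)
  linarith [hX1, hX2, hdivs]

lemma hasDerivAt_phiC (l m t : ℝ) :
    HasDerivAt (fun s => phiC l m s)
      (Real.exp (-((2 * l + m) * t / 2)) * (2 * l ^ 2 / bC l m) *
        (bC l m / 2 * Real.cosh (bC l m * t / 2) - (2 * l + m) / 2 * Real.sinh (bC l m * t / 2)))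
      t := by
  have h1 : HasDerivAt (fun s : ℝ => -((2 * l + m) * s / 2)) (-((2 * l + m) / 2)) t := by
    have heq : (fun s : ℝ => -((2 * l + m) * s / 2)) = fun s : ℝ => (-((2 * l + m) / 2)) * s := by
      funext x; ring
    rw [heq]
    simpa using (hasDerivAt_id t).const_mul (-((2 * l + m) / 2))
  have hexp := h1.exp
  have h2 : HasDerivAt (fun s : ℝ => bC l m * s / 2) (bC l m / 2) t := by
    have heq : (fun s : ℝ => bC l m * s / 2) = fun s : ℝ => (bC l m / 2) * s := by
      funext x; ring
    rw [heq]
    simpa using (hasDerivAt_id t).const_mul (bC l m / 2)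
  have hsinh := h2.sinh
  have := (hexp.mul_const (2 * l ^ 2 / bC l m)).mul hsinh
  have heq2 : (fun s => phiC l m s)
      = fun s => Real.exp (-((2 * l + m) * s / 2)) * (2 * l ^ 2 / bC l m)
          * Real.sinh (bC l m * s / 2) := by
    funext x; rfl
  rw [heq2]
  exact this.congr_deriv (by ring)

lemma phiC_pos {l m t : ℝ} (hl : 0 < l) (hm : 0 < m) (ht : 0 < t) : 0 < phiC l m t := by
  have hb : 0 < bC l m := Real.sqrt_pos.2 (by positivity)
  unfold phiC
  have : 0 < Real.sinh (bC l m * t / 2) := Real.sinh_pos_iff.2 (by positivity)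
  positivity

theorem cold_lr_sufficient (l1 l2 m1 m2 : ℝ)
    (h1 : 0 < l1) (h2 : 0 < l2) (hm1 : 0 < m1) (hm2 : 0 < m2)
    (hcond : 2 * (l2 - l1) ≥ m1 - m2) (hmu : m1 ≥ m2) :
    MonotoneOn (fun t : ℝ => phiC l1 m1 t / phiC l2 m2 t) (Set.Ioi (0 : ℝ)) := by
  have hb1 : 0 < bC l1 m1 := Real.sqrt_pos.2 (by positivity)
  have hb2 : 0 < bC l2 m2 := Real.sqrt_pos.2 (by positivity)
  have sq1 : (bC l1 m1) ^ 2 = m1 ^ 2 + 4 * l1 * m1 := Real.sq_sqrt (by positivity)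
  have sq2 : (bC l2 m2) ^ 2 = m2 ^ 2 + 4 * l2 * m2 := Real.sq_sqrt (by positivity)
  have hl21 : l1 ≤ l2 := by linarith
  have hbk : bC l2 m2 - bC l1 m1 ≤ (2 * l2 + m2) - (2 * l1 + m1) :=
    bkey h1 h2 hm1 hm2 hl21 hmu hb1 hb2 sq1 sq2
  -- derivative of the quotient at each t > 0
  have hder : ∀ t ∈ Set.Ioi (0:ℝ),
      HasDerivAt (fun t : ℝ => phiC l1 m1 t / phiC l2 m2 t)
        (((Real.exp (-((2 * l1 + m1) * t / 2)) * (2 * l1 ^ 2 / bC l1 m1) *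
              (bC l1 m1 / 2 * Real.cosh (bC l1 m1 * t / 2)
                - (2 * l1 + m1) / 2 * Real.sinh (bC l1 m1 * t / 2))) * phiC l2 m2 t
          - phiC l1 m1 t *
            (Real.exp (-((2 * l2 + m2) * t / 2)) * (2 * l2 ^ 2 / bC l2 m2) *
              (bC l2 m2 / 2 * Real.cosh (bC l2 m2 * t / 2)
                - (2 * l2 + m2) / 2 * Real.sinh (bC l2 m2 * t / 2))))
          / phiC l2 m2 t ^ 2) t := by
    intro t ht
    exact (hasDerivAt_phiC l1 m1 t).div (hasDerivAt_phiC l2 m2 t)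
      (phiC_pos h2 hm2 ht).ne'
  apply monotoneOn_of_deriv_nonneg (convex_Ioi 0)
  · intro t ht
    exact ((hder t ht).differentiableAt).continuousAt.continuousWithinAt
  · rw [interior_Ioi]
    intro t ht
    exact ((hder t ht).differentiableAt).differentiableWithinAt
  · rw [interior_Ioi]
    intro t ht
    rw [(hder t ht).deriv]
    apply div_nonneg _ (sq_nonneg _)
    -- core inequality
    have ht' : (0:ℝ) < t := ht
    have hcore := core (a1 := (2 * l1 + m1) / 2) (a2 := (2 * l2 + m2) / 2)
      (c1 := bC l1 m1 / 2) (c2 := bC l2 m2 / 2) ht' (by positivity) (by positivity)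
      (by linarith) (by linarith)
    have e1 : bC l1 m1 / 2 * t = bC l1 m1 * t / 2 := by ring
    have e2 : bC l2 m2 / 2 * t = bC l2 m2 * t / 2 := by ring
    rw [e1, e2] at hcore
    have hfac :
        (Real.exp (-((2 * l1 + m1) * t / 2)) * (2 * l1 ^ 2 / bC l1 m1) *
              (bC l1 m1 / 2 * Real.cosh (bC l1 m1 * t / 2)
                - (2 * l1 + m1) / 2 * Real.sinh (bC l1 m1 * t / 2))) * phiC l2 m2 t
          - phiC l1 m1 t *
            (Real.exp (-((2 * l2 + m2) * t / 2)) * (2 * l2 ^ 2 / bC l2 m2) *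
              (bC l2 m2 / 2 * Real.cosh (bC l2 m2 * t / 2)
                - (2 * l2 + m2) / 2 * Real.sinh (bC l2 m2 * t / 2)))
          = (Real.exp (-((2 * l1 + m1) * t / 2)) * (2 * l1 ^ 2 / bC l1 m1))
            * (Real.exp (-((2 * l2 + m2) * t / 2)) * (2 * l2 ^ 2 / bC l2 m2))
            * (((2 * l2 + m2) / 2 - (2 * l1 + m1) / 2)
                  * Real.sinh (bC l1 m1 * t / 2) * Real.sinh (bC l2 m2 * t / 2)
                + bC l1 m1 / 2 * Real.cosh (bC l1 m1 * t / 2) * Real.sinh (bC l2 m2 * t / 2)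
                - bC l2 m2 / 2 * Real.sinh (bC l1 m1 * t / 2) * Real.cosh (bC l2 m2 * t / 2)) := by
      simp only [phiC]; ring
    rw [hfac]
    apply mul_nonneg
    · positivity
    · linarith [hcore]
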